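/- arXiv:2201.03775 — 2 statements merged into one kernel-verified Lean document; each statement's English description precedes it below -/
import Mathlib

section
/- In a Leibniz algebra, the sum of two nilpotent two-sided ideals is again a nilpotent ideal. -/
/-- The bracket of two submodules: the span of all products `B a b`, `a ∈ I`, `b ∈ J`. -/
def bracketSpan {K L : Type*} [Field K] [AddCommGroup L] [Module K L]
    (B : L →ₗ[K] L →ₗ[K] L) (I J : Submodule K L) : Submodule K L :=
  Submodule.span K {z | ∃ a ∈ I, ∃ b ∈ J, z = B a b}

/-- Lower central series: `lcs B 0 = L¹ = L`, `lcs B k = L^(k+1)`, `L^(k+1) = [L^k, L]`. -/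
def lcs {K L : Type*} [Field K] [AddCommGroup L] [Module K L]
    (B : L →ₗ[K] L →ₗ[K] L) : ℕ → Submodule K L
  | 0 => ⊤
  | k + 1 => bracketSpan B (lcs B k) ⊤

/-- Derived series: `derSeries B 0 = L^[1] = L`, `L^[s+1] = [L^[s], L^[s]]`. -/
def derSeries {K L : Type*} [Field K] [AddCommGroup L] [Module K L]
    (B : L →ₗ[K] L →ₗ[K] L) : ℕ → Submodule K L
  | 0 => ⊤
  | k + 1 => bracketSpan B (derSeries B k) (derSeries B k)

/-- A two-sided ideal of the algebra `(L, B)`. -/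
def IsTwoSidedIdeal {K L : Type*} [Field K] [AddCommGroup L] [Module K L]
    (B : L →ₗ[K] L →ₗ[K] L) (I : Submodule K L) : Prop :=
  ∀ x ∈ I, ∀ y : L, B x y ∈ I ∧ B y x ∈ I

/-- Lower central series of an ideal `I`: `I^(k+1) = [I^k, I] + [I, I^k]`. -/
def idealLCS {K L : Type*} [Field K] [AddCommGroup L] [Module K L]
    (B : L →ₗ[K] L →ₗ[K] L) (I : Submodule K L) : ℕ → Submodule K L
  | 0 => I
  | k + 1 => bracketSpan B (idealLCS B I k) I ⊔ bracketSpan B I (idealLCS B I k)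

/-- `I` is a nilpotent ideal. -/
def IsNilpotentIdeal {K L : Type*} [Field K] [AddCommGroup L] [Module K L]
    (B : L →ₗ[K] L →ₗ[K] L) (I : Submodule K L) : Prop :=
  IsTwoSidedIdeal B I ∧ ∃ k : ℕ, idealLCS B I k = ⊥

/-- The standard basis vector `e i` of `Fin n → ℂ`. -/
def e {n : ℕ} (i : Fin n) : Fin n → ℂ := Pi.single i 1

section Aux

variable {K L : Type*} [Field K] [AddCommGroup L] [Module K L]
  (B : L →ₗ[K] L →ₗ[K] L)

lemma mem_bracketSpan {I J : Submodule K L} {a b : L} (ha : a ∈ I) (hb : b ∈ J) :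
    B a b ∈ bracketSpan B I J :=
  Submodule.subset_span ⟨a, ha, b, hb, rfl⟩

lemma bracketSpan_le {I J N : Submodule K L} :
    bracketSpan B I J ≤ N ↔ ∀ a ∈ I, ∀ b ∈ J, B a b ∈ N := by
  constructor
  · intro h a ha b hb; exact h (mem_bracketSpan B ha hb)
  · intro h
    apply Submodule.span_le.mpr
    rintro z ⟨a, ha, b, hb, rfl⟩
    exact h a ha b hb

lemma bracketSpan_mono {I I' J J' : Submodule K L} (h1 : I ≤ I') (h2 : J ≤ J') :
    bracketSpan B I J ≤ bracketSpan B I' J' :=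
  (bracketSpan_le B).mpr fun a ha b hb => mem_bracketSpan B (h1 ha) (h2 hb)

lemma bracketSpan_bot_left {J : Submodule K L} : bracketSpan B ⊥ J = ⊥ := by
  refine le_bot_iff.mp ((bracketSpan_le B).mpr ?_)
  rintro a ha b _
  rw [Submodule.mem_bot] at ha ⊢
  simp [ha]

lemma bracketSpan_bot_right {I : Submodule K L} : bracketSpan B I ⊥ = ⊥ := by
  refine le_bot_iff.mp ((bracketSpan_le B).mpr ?_)
  rintro a _ b hb
  rw [Submodule.mem_bot] at hb ⊢
  simp [hb]

lemma bracketSpan_sup_left {I I' J : Submodule K L} :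
    bracketSpan B (I ⊔ I') J ≤ bracketSpan B I J ⊔ bracketSpan B I' J := by
  refine (bracketSpan_le B).mpr fun a ha b hb => ?_
  obtain ⟨x, hx, y, hy, rfl⟩ := Submodule.mem_sup.mp ha
  rw [map_add, LinearMap.add_apply]
  exact Submodule.add_mem _ (Submodule.mem_sup_left (mem_bracketSpan B hx hb))
    (Submodule.mem_sup_right (mem_bracketSpan B hy hb))

lemma bracketSpan_sup_right {I J J' : Submodule K L} :
    bracketSpan B I (J ⊔ J') ≤ bracketSpan B I J ⊔ bracketSpan B I J' := by
  refine (bracketSpan_le B).mpr fun a ha b hb => ?_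
  obtain ⟨x, hx, y, hy, rfl⟩ := Submodule.mem_sup.mp hb
  rw [map_add]
  exact Submodule.add_mem _ (Submodule.mem_sup_left (mem_bracketSpan B ha hx))
    (Submodule.mem_sup_right (mem_bracketSpan B ha hy))

/-- reduce a `bracketSpan _ _ ≤ N` goal where the left argument is itself a span
to the generators. -/
lemma bracketSpan_left_span_le {A J N : Submodule K L}
    (h : ∀ a ∈ A, ∀ b ∈ J, B a b ∈ N) : bracketSpan B A J ≤ N :=
  (bracketSpan_le B).mpr h

lemma bracketSpan_bracketSpan_left_le {A C D N : Submodule K L}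
    (h : ∀ a ∈ A, ∀ c ∈ C, ∀ d ∈ D, B (B a c) d ∈ N) :
    bracketSpan B (bracketSpan B A C) D ≤ N := by
  refine (bracketSpan_le B).mpr fun x hx d hd => ?_
  induction hx using Submodule.span_induction with
  | mem z hz => obtain ⟨a, ha, c, hc, rfl⟩ := hz; exact h a ha c hc d hd
  | zero => simpa using N.zero_mem
  | add a b _ _ ha hb => rw [map_add, LinearMap.add_apply]; exact N.add_mem ha hb
  | smul t a _ ha => rw [map_smul, LinearMap.smul_apply]; exact N.smul_mem t ha

lemma bracketSpan_bracketSpan_right_le {A C D N : Submodule K L}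
    (h : ∀ a ∈ A, ∀ c ∈ C, ∀ d ∈ D, B a (B c d) ∈ N) :
    bracketSpan B A (bracketSpan B C D) ≤ N := by
  refine (bracketSpan_le B).mpr fun a ha x hx => ?_
  induction hx using Submodule.span_induction with
  | mem z hz => obtain ⟨c, hc, d, hd, rfl⟩ := hz; exact h a ha c hc d hd
  | zero => simpa using N.zero_mem
  | add c d _ _ hc hd => rw [map_add]; exact N.add_mem hc hd
  | smul t c _ hc => rw [map_smul]; exact N.smul_mem t hc

lemma isTwoSidedIdeal_of {N : Submodule K L}
    (h1 : bracketSpan B N ⊤ ≤ N) (h2 : bracketSpan B ⊤ N ≤ N) :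
    IsTwoSidedIdeal B N := fun x hx y =>
  ⟨h1 (mem_bracketSpan B hx trivial), h2 (mem_bracketSpan B trivial hx)⟩

lemma leibniz_rot (hLeib : ∀ x y z : L, B x (B y z) = B (B x y) z - B (B x z) y)
    (x y z : L) : B (B x y) z = B x (B y z) + B (B x z) y := by
  rw [hLeib x y z]; abel

end Aux

section Aux2

variable {K L : Type*} [Field K] [AddCommGroup L] [Module K L]
  (B : L →ₗ[K] L →ₗ[K] L)

lemma idealLCS_isTwoSidedIdeal
    (hLeib : ∀ x y z : L, B x (B y z) = B (B x y) z - B (B x z) y)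
    {I : Submodule K L} (hI : IsTwoSidedIdeal B I) :
    ∀ k, IsTwoSidedIdeal B (idealLCS B I k) := by
  intro k
  induction k with
  | zero => exact hI
  | succ k ih =>
    set P := idealLCS B I k with hP
    have hPI : bracketSpan B P I ≤ idealLCS B I (k + 1) := le_sup_left
    have hIP : bracketSpan B I P ≤ idealLCS B I (k + 1) := le_sup_right
    apply isTwoSidedIdeal_of
    · show bracketSpan B (bracketSpan B P I ⊔ bracketSpan B I P) ⊤ ≤ _
      refine le_trans (bracketSpan_sup_left B) (sup_le ?_ ?_)
      · refine bracketSpan_bracketSpan_left_le B fun a ha c hc d _ => ?_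
        rw [leibniz_rot B hLeib]
        exact Submodule.add_mem _
          (hPI (mem_bracketSpan B ha ((hI c hc d).1)))
          (hPI (mem_bracketSpan B ((ih a ha d).1) hc))
      · refine bracketSpan_bracketSpan_left_le B fun a ha c hc d _ => ?_
        rw [leibniz_rot B hLeib]
        exact Submodule.add_mem _
          (hIP (mem_bracketSpan B ha ((ih c hc d).1)))
          (hIP (mem_bracketSpan B ((hI a ha d).1) hc))
    · show bracketSpan B ⊤ (bracketSpan B P I ⊔ bracketSpan B I P) ≤ _
      refine le_trans (bracketSpan_sup_right B) (sup_le ?_ ?_)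
      · refine bracketSpan_bracketSpan_right_le B fun y _ a ha c hc => ?_
        rw [hLeib]
        exact Submodule.sub_mem _
          (hPI (mem_bracketSpan B ((ih a ha y).2) hc))
          (hIP (mem_bracketSpan B ((hI c hc y).2) ha))
      · refine bracketSpan_bracketSpan_right_le B fun y _ a ha c hc => ?_
        rw [hLeib]
        exact Submodule.sub_mem _
          (hIP (mem_bracketSpan B ((hI a ha y).2) hc))
          (hPI (mem_bracketSpan B ((ih c hc y).2) ha))

/-- `gsIdeal B I 0 = ⊤`, `gsIdeal B I (p+1) = I^(p+1) = idealLCS B I p`. -/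
def gsIdeal (I : Submodule K L) : ℕ → Submodule K L
  | 0 => ⊤
  | p + 1 => idealLCS B I p

lemma gsIdeal_isTwoSidedIdeal
    (hLeib : ∀ x y z : L, B x (B y z) = B (B x y) z - B (B x z) y)
    {I : Submodule K L} (hI : IsTwoSidedIdeal B I) :
    ∀ p, IsTwoSidedIdeal B (gsIdeal B I p)
  | 0 => fun x _ y => ⟨trivial, trivial⟩
  | p + 1 => idealLCS_isTwoSidedIdeal B hLeib hI p

/-- bracketing the filtration piece with `I` on the right raises the `I`-degree. -/
lemma key_right {I N : Submodule K L} (hI : IsTwoSidedIdeal B I)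
    (hN : IsTwoSidedIdeal B N) (p : ℕ) :
    bracketSpan B (gsIdeal B I p ⊓ N) I ≤ gsIdeal B I (p + 1) ⊓ N := by
  refine (bracketSpan_le B).mpr fun a ha b hb => ⟨?_, (hN a ha.2 b).1⟩
  match p with
  | 0 => exact (hI b hb a).2
  | p + 1 => exact le_sup_left (α := Submodule K L) (mem_bracketSpan B ha.1 hb)

lemma key_left {I N : Submodule K L} (hI : IsTwoSidedIdeal B I)
    (hN : IsTwoSidedIdeal B N) (p : ℕ) :
    bracketSpan B I (gsIdeal B I p ⊓ N) ≤ gsIdeal B I (p + 1) ⊓ N := by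
  refine (bracketSpan_le B).mpr fun a ha b hb => ⟨?_, (hN b hb.2 a).2⟩
  match p with
  | 0 => exact (hI a ha b).1
  | p + 1 => exact le_sup_right (α := Submodule K L) (mem_bracketSpan B ha hb.1)

lemma idealLCS_bot_propagate {I : Submodule K L} {k : ℕ} (h : idealLCS B I k = ⊥) :
    ∀ m, k ≤ m → idealLCS B I m = ⊥ := by
  intro m hm
  induction m with
  | zero => exact Nat.le_zero.mp hm ▸ h
  | succ m ih =>
    rcases Nat.lt_or_ge k (m + 1) with h' | h'
    · have hb : idealLCS B I m = ⊥ := ih (Nat.lt_succ_iff.mp h')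
      show bracketSpan B (idealLCS B I m) I ⊔ bracketSpan B I (idealLCS B I m) = ⊥
      rw [hb, bracketSpan_bot_left, bracketSpan_bot_right, sup_idem]
    · have : k = m + 1 := le_antisymm hm h'
      exact this ▸ h

end Aux2

section Aux3

variable {K L : Type*} [Field K] [AddCommGroup L] [Module K L]
  (B : L →ₗ[K] L →ₗ[K] L)

lemma bracketSpan_finsetSup_left {ι : Type*} (s : Finset ι) (f : ι → Submodule K L)
    (J : Submodule K L) :
    bracketSpan B (s.sup f) J ≤ s.sup fun p => bracketSpan B (f p) J := by
  induction s using Finset.cons_induction with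
  | empty => simp [bracketSpan_bot_left]
  | cons a s ha ih =>
    rw [Finset.sup_cons, Finset.sup_cons]
    exact le_trans (bracketSpan_sup_left B) (sup_le_sup le_rfl ih)

lemma bracketSpan_finsetSup_right {ι : Type*} (s : Finset ι) (f : ι → Submodule K L)
    (J : Submodule K L) :
    bracketSpan B J (s.sup f) ≤ s.sup fun p => bracketSpan B J (f p) := by
  induction s using Finset.cons_induction with
  | empty => simp [bracketSpan_bot_right]
  | cons a s ha ih =>
    rw [Finset.sup_cons, Finset.sup_cons]
    exact le_trans (bracketSpan_sup_right B) (sup_le_sup le_rfl ih)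

lemma main_filtration
    (hLeib : ∀ x y z : L, B x (B y z) = B (B x y) z - B (B x z) y)
    {I J : Submodule K L} (hI : IsTwoSidedIdeal B I) (hJ : IsTwoSidedIdeal B J) :
    ∀ k, idealLCS B (I ⊔ J) k ≤
      (Finset.range (k + 2)).sup fun p => gsIdeal B I p ⊓ gsIdeal B J (k + 1 - p) := by
  have hgsI := gsIdeal_isTwoSidedIdeal B hLeib hI
  have hgsJ := gsIdeal_isTwoSidedIdeal B hLeib hJ
  intro k
  induction k with
  | zero =>
    show I ⊔ J ≤ _
    refine sup_le (le_trans ?_ (Finset.le_sup (f := fun p => gsIdeal B I p ⊓ gsIdeal B J (0 + 1 - p)) (by simp : (1:ℕ) ∈ Finset.range 2)))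
      (le_trans ?_ (Finset.le_sup (f := fun p => gsIdeal B I p ⊓ gsIdeal B J (0 + 1 - p)) (by simp : (0:ℕ) ∈ Finset.range 2)))
    · show I ≤ gsIdeal B I 1 ⊓ gsIdeal B J 0
      exact le_inf le_rfl le_top
    · show J ≤ gsIdeal B I 0 ⊓ gsIdeal B J 1
      exact le_inf le_top le_rfl
  | succ k ih =>
    set F := fun n => (Finset.range (n + 2)).sup
      fun p => gsIdeal B I p ⊓ gsIdeal B J (n + 1 - p) with hF
    show bracketSpan B (idealLCS B (I ⊔ J) k) (I ⊔ J)
        ⊔ bracketSpan B (I ⊔ J) (idealLCS B (I ⊔ J) k) ≤ F (k + 1)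
    have hIk : ∀ p ∈ Finset.range (k + 2),
        gsIdeal B I (p + 1) ⊓ gsIdeal B J (k + 1 - p) ≤ F (k + 1) := by
      intro p hp
      have hq : k + 1 - p = k + 2 - (p + 1) := by omega
      rw [hq]
      exact Finset.le_sup (f := fun p => gsIdeal B I p ⊓ gsIdeal B J (k + 2 - p))
        (Finset.mem_range.mpr (by simp at hp; omega) : p + 1 ∈ Finset.range (k + 3))
    have hJk : ∀ p ∈ Finset.range (k + 2),
        gsIdeal B I p ⊓ gsIdeal B J (k + 1 - p + 1) ≤ F (k + 1) := by
      intro p hp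
      have hq : k + 1 - p + 1 = k + 2 - p := by simp at hp; omega
      rw [hq]
      exact Finset.le_sup (f := fun p => gsIdeal B I p ⊓ gsIdeal B J (k + 2 - p))
        (Finset.mem_range.mpr (by simp at hp; omega) : p ∈ Finset.range (k + 3))
    refine sup_le ?_ ?_
    · calc bracketSpan B (idealLCS B (I ⊔ J) k) (I ⊔ J)
          ≤ bracketSpan B (F k) (I ⊔ J) := bracketSpan_mono B ih le_rfl
        _ ≤ bracketSpan B (F k) I ⊔ bracketSpan B (F k) J := bracketSpan_sup_right B
        _ ≤ F (k + 1) := by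
            refine sup_le ?_ ?_
            · refine le_trans (bracketSpan_finsetSup_left B _ _ _) (Finset.sup_le fun p hp => ?_)
              exact le_trans (key_right B hI (hgsJ _) p) (hIk p hp)
            · refine le_trans (bracketSpan_finsetSup_left B _ _ _) (Finset.sup_le fun p hp => ?_)
              rw [inf_comm]
              refine le_trans (key_right B hJ (hgsI _) _) ?_
              rw [inf_comm]
              exact hJk p hp
    · calc bracketSpan B (I ⊔ J) (idealLCS B (I ⊔ J) k)
          ≤ bracketSpan B (I ⊔ J) (F k) := bracketSpan_mono B le_rfl ih
        _ ≤ bracketSpan B I (F k) ⊔ bracketSpan B J (F k) := bracketSpan_sup_left B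
        _ ≤ F (k + 1) := by
            refine sup_le ?_ ?_
            · refine le_trans (bracketSpan_finsetSup_right B _ _ _) (Finset.sup_le fun p hp => ?_)
              exact le_trans (key_left B hI (hgsJ _) p) (hIk p hp)
            · refine le_trans (bracketSpan_finsetSup_right B _ _ _) (Finset.sup_le fun p hp => ?_)
              rw [inf_comm]
              refine le_trans (key_left B hJ (hgsI _) _) ?_
              rw [inf_comm]
              exact hJk p hp

end Aux3

/-- In a Leibniz algebra, the sum of two nilpotent two-sided ideals is again a
nilpotent two-sided ideal. -/
theorem sum_of_nilpotent_ideals_is_nilpotent_ideal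
    {K L : Type*} [Field K] [AddCommGroup L] [Module K L]
    (B : L →ₗ[K] L →ₗ[K] L)
    (hLeib : ∀ x y z : L, B x (B y z) = B (B x y) z - B (B x z) y)
    (I J : Submodule K L)
    (hI : IsNilpotentIdeal B I) (hJ : IsNilpotentIdeal B J) :
    IsNilpotentIdeal B (I ⊔ J) := by
  obtain ⟨hIid, a, ha⟩ := hI
  obtain ⟨hJid, b, hb⟩ := hJ
  constructor
  · intro x hx y
    obtain ⟨u, hu, v, hv, rfl⟩ := Submodule.mem_sup.mp hx
    constructor
    · rw [map_add, LinearMap.add_apply]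
      exact Submodule.add_mem _ (Submodule.mem_sup_left (hIid u hu y).1)
        (Submodule.mem_sup_right (hJid v hv y).1)
    · rw [map_add]
      exact Submodule.add_mem _ (Submodule.mem_sup_left (hIid u hu y).2)
        (Submodule.mem_sup_right (hJid v hv y).2)
  · refine ⟨a + b + 1, le_bot_iff.mp ?_⟩
    refine le_trans (main_filtration B hLeib hIid hJid (a + b + 1)) ?_
    refine Finset.sup_le fun p hp => ?_
    rw [Finset.mem_range] at hp
    rcases Nat.lt_or_ge p (a + 1) with h | h
    · have h1 : a + b + 1 + 1 - p = (a + b + 1 - p) + 1 := by omega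
      rw [h1]
      have h2 : gsIdeal B J ((a + b + 1 - p) + 1) = ⊥ :=
        idealLCS_bot_propagate B hb _ (by omega)
      rw [h2]
      exact le_trans inf_le_right le_rfl
    · have h1 : p = (p - 1) + 1 := by omega
      rw [h1]
      have h2 : gsIdeal B I ((p - 1) + 1) = ⊥ :=
        idealLCS_bot_propagate B ha _ (by omega)
      rw [h2]
      exact le_trans inf_le_left le_rfl
end

section
/- For n ≥ 6, the n-dimensional algebra μ₂ with basis e₁,…,e_n and nonzero products [e_i,e₁] = e_{i+1} for 1 ≤ i ≤ n−3, [e₁,e_{n−1}] = e₂ + e_n, and [e_i,e_{n−1}] = e_{i+1} for 2 ≤ i ≤ n−3 is a nilpotent Leibniz algebra that is not a Lie algebra. -/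
/-- Weight of the `m`-th basis vector (auxiliary for the nilpotency proof). -/
def wt (n : ℕ) (m : Fin n) : ℕ :=
  if m.val = 0 then 1 else if m.val = n - 2 then 1 else if m.val = n - 1 then 2 else m.val + 1

/-- Span of basis vectors of weight at least `a` (auxiliary). -/
noncomputable def Wt (n : ℕ) (a : ℕ) : Submodule ℂ (Fin n → ℂ) :=
  Submodule.span ℂ {v | ∃ m : Fin n, a ≤ wt n m ∧ v = e m}

lemma wt_def {n : ℕ} (m : Fin n) :
    wt n m = if m.val = 0 then 1 else if m.val = n - 2 then 1
      else if m.val = n - 1 then 2 else m.val + 1 := rfl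

lemma wt_val (n m : ℕ) (h : m < n) :
    wt n ⟨m, h⟩ = if m = 0 then 1 else if m = n - 2 then 1
      else if m = n - 1 then 2 else m + 1 := rfl
set_option maxHeartbeats 4000000 in
/-- For `n ≥ 6`, the algebra `μ₂` with basis `e₁, …, eₙ` and nonzero products
`[eᵢ,e₁] = eᵢ₊₁` (`1 ≤ i ≤ n-3`), `[e₁,e_{n-1}] = e₂ + eₙ`, and
`[eᵢ,e_{n-1}] = eᵢ₊₁` (`2 ≤ i ≤ n-3`) (all `0`-based below) is a nilpotent
Leibniz algebra which is not a Lie algebra. -/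
theorem mu2_is_nilpotent_nonLie_leibniz (n : ℕ) (hn : 6 ≤ n)
    (B : (Fin n → ℂ) →ₗ[ℂ] (Fin n → ℂ) →ₗ[ℂ] (Fin n → ℂ))
    (hmul : ∀ i j : Fin n, B (e i) (e j) =
      if h : j.val = 0 ∧ i.val ≤ n - 4 then e ⟨i.val + 1, by omega⟩
      else if h2 : i.val = 0 ∧ j.val = n - 2 then
        e ⟨1, by omega⟩ + e ⟨n - 1, by omega⟩
      else if h3 : 1 ≤ i.val ∧ i.val ≤ n - 4 ∧ j.val = n - 2 then
        e ⟨i.val + 1, by omega⟩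
      else 0) :
    (∀ x y z : Fin n → ℂ, B x (B y z) = B (B x y) z - B (B x z) y) ∧
      (∃ k : ℕ, lcs B k = ⊥) ∧
      (∃ x y : Fin n → ℂ, B x y ≠ -B y x) := by
  -- the standard basis spans everything
  have hspan : Submodule.span ℂ (Set.range (e (n := n))) = ⊤ := by
    rw [eq_top_iff]
    intro x _
    rw [← Finset.univ_sum_single x]
    refine Submodule.sum_mem _ (fun i _ => ?_)
    rw [show (Pi.single i (x i) : Fin n → ℂ) = x i • (Pi.single i 1 : Fin n → ℂ) by
      rw [← Pi.single_smul, smul_eq_mul, mul_one]]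
    exact Submodule.smul_mem _ _ (Submodule.subset_span ⟨i, rfl⟩)
  have hxall : ∀ v : Fin n → ℂ, v ∈ Submodule.span ℂ (Set.range (e (n := n))) := by
    intro v; rw [hspan]; trivial
  -- products of basis vectors annihilate on the left-iterated side
  have hL : ∀ i j k : Fin n, B (e i) (B (e j) (e k)) = 0 := by
    intro i j k
    rw [hmul j k]
    split_ifs with h1 h2 h3
    · rw [hmul, dif_neg (by simp only [Fin.val_mk]; omega),
        dif_neg (by simp only [Fin.val_mk]; omega),
        dif_neg (by simp only [Fin.val_mk]; omega)]
    · rw [map_add, hmul, hmul,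
        dif_neg (by simp only [Fin.val_mk]; omega),
        dif_neg (by simp only [Fin.val_mk]; omega),
        dif_neg (by simp only [Fin.val_mk]; omega),
        dif_neg (by simp only [Fin.val_mk]; omega),
        dif_neg (by simp only [Fin.val_mk]; omega),
        dif_neg (by simp only [Fin.val_mk]; omega), add_zero]
    · rw [hmul, dif_neg (by simp only [Fin.val_mk]; omega),
        dif_neg (by simp only [Fin.val_mk]; omega),
        dif_neg (by simp only [Fin.val_mk]; omega)]
    · rw [map_zero]
  -- the twice-iterated product on basis vectors, symmetric in the last two slots
  have hR : ∀ i j k : Fin n, B (B (e i) (e j)) (e k) =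
      if h : i.val ≤ n - 5 ∧ (j.val = 0 ∨ j.val = n - 2) ∧ (k.val = 0 ∨ k.val = n - 2)
      then e ⟨i.val + 2, by omega⟩ else 0 := by
    intro i j k
    rw [hmul i j]
    split_ifs with h1 h2 h3 h4 h4 h4 h4
    -- h1 : j = 0 ∧ i ≤ n-4, product is e (i+1)
    · rw [hmul]
      split_ifs with a b c <;>
        first
          | (exfalso; simp only [Fin.val_mk] at *; omega)
          | (exfalso; simp_all; done)
          | (apply congrArg e; simp only [Fin.mk.injEq, Fin.val_mk] at *; omega)
          | rfl
    · rw [hmul]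
      split_ifs with a b c <;>
        first
          | (exfalso; simp only [Fin.val_mk] at *; omega)
          | (exfalso; simp_all; done)
          | rfl
    -- h2 : i = 0 ∧ j = n-2, product is e 1 + e (n-1)
    · rw [map_add, LinearMap.add_apply, hmul, hmul]
      split_ifs <;>
        first
          | (exfalso; simp only [Fin.val_mk] at *; omega)
          | (exfalso; simp_all; done)
          | (rw [add_zero]; apply congrArg e;
              simp only [Fin.mk.injEq, Fin.val_mk] at *; omega)
          | (simp; done)
    · rw [map_add, LinearMap.add_apply, hmul, hmul]
      split_ifs <;>
        first
          | (exfalso; simp only [Fin.val_mk] at *; omega)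
          | (exfalso; simp_all; done)
          | (rw [add_zero]; apply congrArg e;
              simp only [Fin.mk.injEq, Fin.val_mk] at *; omega)
          | (simp; done)
    -- h3 : 1 ≤ i ≤ n-4 ∧ j = n-2, product is e (i+1)
    · rw [hmul]
      split_ifs with a b c <;>
        first
          | (exfalso; simp only [Fin.val_mk] at *; omega)
          | (exfalso; simp_all; done)
          | (apply congrArg e; simp only [Fin.mk.injEq, Fin.val_mk] at *; omega)
          | rfl
    · rw [hmul]
      split_ifs with a b c <;>
        first
          | (exfalso; simp only [Fin.val_mk] at *; omega)
          | (exfalso; simp_all; done)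
          | rfl
    -- product is 0
    · exfalso; omega
    · rw [map_zero, LinearMap.zero_apply]
  -- Leibniz identity on basis vectors
  have hbasis : ∀ i j k : Fin n,
      B (e i) (B (e j) (e k)) = B (B (e i) (e j)) (e k) - B (B (e i) (e k)) (e j) := by
    intro i j k
    rw [hL i j k, hR i j k, hR i k j]
    split_ifs with h1 h2 <;> first | tauto | (simp; done)
  -- lift the identity by trilinearity
  have step1 : ∀ (i j : Fin n) (z : Fin n → ℂ),
      B (e i) (B (e j) z) = B (B (e i) (e j)) z - B (B (e i) z) (e j) := by
    intro i j z
    refine Submodule.span_induction ?_ ?_ ?_ ?_ (hxall z)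
    · rintro _ ⟨k, rfl⟩; exact hbasis i j k
    · simp
    · intro x y _ _ hx hy
      simp only [map_add, LinearMap.add_apply, hx, hy]; abel
    · intro a x _ hx
      simp only [map_smul, LinearMap.smul_apply, hx, smul_sub]
  have step2 : ∀ (i : Fin n) (y z : Fin n → ℂ),
      B (e i) (B y z) = B (B (e i) y) z - B (B (e i) z) y := by
    intro i y z
    refine Submodule.span_induction (p := fun y _ => ∀ z,
        B (e i) (B y z) = B (B (e i) y) z - B (B (e i) z) y) ?_ ?_ ?_ ?_ (hxall y) z
    · rintro _ ⟨j, rfl⟩ z; exact step1 i j z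
    · intro z; simp
    · intro x y _ _ hx hy z
      simp only [map_add, LinearMap.add_apply, hx, hy]; abel
    · intro a x _ hx z
      simp only [map_smul, LinearMap.smul_apply, hx, smul_sub]
  have leib : ∀ x y z : Fin n → ℂ, B x (B y z) = B (B x y) z - B (B x z) y := by
    intro x y z
    refine Submodule.span_induction (p := fun x _ => ∀ y z,
        B x (B y z) = B (B x y) z - B (B x z) y) ?_ ?_ ?_ ?_ (hxall x) y z
    · rintro _ ⟨i, rfl⟩ y z; exact step2 i y z
    · intro y z; simp
    · intro a b _ _ ha hb y z
      simp only [map_add, LinearMap.add_apply, ha, hb]; abel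
    · intro c a _ ha y z
      simp only [map_smul, LinearMap.smul_apply, ha, smul_sub]
  have part2 : ∃ k : ℕ, lcs B k = ⊥ := by
    have hwmem : ∀ (a : ℕ) (m : Fin n), a ≤ wt n m → e m ∈ Wt n a := by
      intro a m hm; exact Submodule.subset_span ⟨m, hm, rfl⟩
    have key : ∀ (a : ℕ) (x : Fin n → ℂ), x ∈ Wt n a → ∀ y, B x y ∈ Wt n (a + 1) := by
      intro a x hx
      refine Submodule.span_induction (p := fun x _ => ∀ y, B x y ∈ Wt n (a + 1))
        ?_ ?_ ?_ ?_ hx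
      · rintro _ ⟨m, hm, rfl⟩ y
        refine Submodule.span_induction (p := fun y _ => B (e m) y ∈ Wt n (a + 1))
          ?_ ?_ ?_ ?_ (hxall y)
        · rintro _ ⟨j, rfl⟩
          rw [hmul m j]
          split_ifs with h1 h2 h3
          · refine hwmem _ _ ?_
            rw [wt_val]
            rw [wt_def] at hm
            split_ifs at hm ⊢ <;> first | omega | (exfalso; assumption)
          · refine add_mem (hwmem _ _ ?_) (hwmem _ _ ?_) <;>
              · rw [wt_val]
                rw [wt_def] at hm
                split_ifs at hm ⊢ <;> first | omega | (exfalso; assumption)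
          · refine hwmem _ _ ?_
            rw [wt_val]
            rw [wt_def] at hm
            split_ifs at hm ⊢ <;> first | omega | (exfalso; assumption)
          · exact zero_mem _
        · show B (e m) 0 ∈ Wt n (a + 1)
          rw [map_zero]; exact zero_mem _
        · intro y1 y2 _ _ h1 h2; rw [map_add]; exact add_mem h1 h2
        · intro c y _ h; rw [map_smul]; exact Submodule.smul_mem _ _ h
      · intro y; rw [map_zero, LinearMap.zero_apply]; exact zero_mem _
      · intro x1 x2 _ _ h1 h2 y
        rw [map_add, LinearMap.add_apply]; exact add_mem (h1 y) (h2 y)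
      · intro c x _ h y
        rw [map_smul, LinearMap.smul_apply]; exact Submodule.smul_mem _ _ (h y)
    have hlcs : ∀ k, lcs B k ≤ Wt n (k + 1) := by
      intro k
      induction k with
      | zero =>
        intro v _
        refine Submodule.span_le.2 ?_ (hxall v)
        rintro _ ⟨m, rfl⟩
        refine Submodule.subset_span ⟨m, ?_, rfl⟩
        rw [wt_def]; split_ifs <;> first | omega | (exfalso; assumption)
      | succ k ih =>
        show bracketSpan B (lcs B k) ⊤ ≤ Wt n (k + 2)
        refine Submodule.span_le.2 ?_
        rintro _ ⟨a, ha, b, -, rfl⟩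
        exact key (k + 1) a (ih ha) b
    refine ⟨n - 2, le_bot_iff.1 ?_⟩
    have h1 : lcs B (n - 2) ≤ Wt n (n - 2 + 1) := hlcs (n - 2)
    have h2 : Wt n (n - 2 + 1) ≤ ⊥ := by
      refine Submodule.span_le.2 ?_
      rintro _ ⟨m, hm, rfl⟩
      exfalso
      have hlt := m.isLt
      rw [wt_def] at hm
      split_ifs at hm <;> first | omega | (exfalso; assumption)
    exact le_trans h1 h2
  have part3 : ∃ x y : Fin n → ℂ, B x y ≠ -B y x := by
    refine ⟨e ⟨0, by omega⟩, e ⟨n - 2, by omega⟩, ?_⟩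
    rw [hmul, hmul]
    split_ifs <;> try (exfalso; simp only [Fin.val_mk] at *; all_goals first | omega | simp_all; done)
    rw [neg_zero]
    intro hEq
    have hval := congrFun hEq ⟨1, by omega⟩
    simp only [e, Pi.add_apply, Pi.single_eq_same, Pi.zero_apply] at hval
    rw [Pi.single_eq_of_ne (by simp only [ne_eq, Fin.mk.injEq]; omega)] at hval
    norm_num at hval
  exact ⟨leib, part2, part3⟩
end
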